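/- Let p be a prime and n ≥ 1. The n-th term of the p-Zassenhaus (dimension subgroup) filtration of U_n(F_p) is trivial: U_n(F_p)_{(n)} = 1. -/

import Mathlib

/-- An upper-triangular unipotent matrix: zeros below the diagonal, ones on the diagonal. -/
def IsUnipotentUpper {R : Type*} [CommRing R] {n : ℕ} (A : Matrix (Fin n) (Fin n) R) : Prop :=
  (∀ i j : Fin n, j < i → A i j = 0) ∧ ∀ i : Fin n, A i i = 1

/-- The group `U_n(R)` of upper-triangular unipotent `n × n` matrices over `R`. -/
def UnipotentGrp (R : Type*) [CommRing R] (n : ℕ) : Subgroup (Matrix (Fin n) (Fin n) R)ˣ :=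
  Subgroup.closure {A : (Matrix (Fin n) (Fin n) R)ˣ |
    IsUnipotentUpper ((A : Matrix (Fin n) (Fin n) R))}

open scoped commutatorElement

/-- Fuel-based recursion computing the `p`-Zassenhaus filtration:
`G_(1) = G`, `G_(n) = (G_(⌈n/p⌉))^p · ∏_{i+j=n, i,j ≥ 1} [G_(i), G_(j)]`.
Since for `p ≥ 2` every recursive index is strictly smaller than `n`, fuel `n` suffices,
and `zassenhaus p G n = G_(n)` for all `n ≥ 1` (with `⊤` as junk value at `0`). -/
def zassAux (p : ℕ) (G : Type*) [Group G] : ℕ → ℕ → Subgroup G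
  | 0, _ => ⊤
  | (fuel + 1), n =>
    if n ≤ 1 then ⊤
    else
      Subgroup.closure
        ({g | ∃ x ∈ zassAux p G fuel ((n + p - 1) / p), g = x ^ p} ∪
         {g | ∃ i j : ℕ, 1 ≤ i ∧ 1 ≤ j ∧ i + j = n ∧
              ∃ x ∈ zassAux p G fuel i, ∃ y ∈ zassAux p G fuel j, g = ⁅x, y⁆})

/-- The `p`-Zassenhaus filtration `G_(n)` of `G` (for `n ≥ 1`; junk value `⊤` at `0`). -/
def zassenhaus (p : ℕ) (G : Type*) [Group G] (n : ℕ) : Subgroup G := zassAux p G n n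

namespace Stmt12Aux

variable {R : Type*} [CommRing R] {n : ℕ}

/-- `N` vanishes on the first `k` bands: `N i j = 0` whenever `j < i + k`. -/
def Lv (k : ℕ) (N : Matrix (Fin n) (Fin n) R) : Prop :=
  ∀ i j : Fin n, (j : ℕ) < (i : ℕ) + k → N i j = 0

lemma Lv.mono {k l : ℕ} {N : Matrix (Fin n) (Fin n) R} (h : k ≤ l) (hN : Lv l N) : Lv k N :=
  fun i j hij => hN i j (by omega)

lemma lv_zero (k : ℕ) : Lv k (0 : Matrix (Fin n) (Fin n) R) := fun _ _ _ => rfl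

lemma lv_one : Lv 0 (1 : Matrix (Fin n) (Fin n) R) := by
  intro i j hij
  exact Matrix.one_apply_ne (fun e => by subst e; omega)

lemma Lv.add {k : ℕ} {M N : Matrix (Fin n) (Fin n) R} (hM : Lv k M) (hN : Lv k N) :
    Lv k (M + N) := fun i j h => by
  simp [Matrix.add_apply, hM i j h, hN i j h]

lemma Lv.neg {k : ℕ} {N : Matrix (Fin n) (Fin n) R} (hN : Lv k N) : Lv k (-N) := fun i j h => by
  simp [Matrix.neg_apply, hN i j h]

lemma Lv.sub {k : ℕ} {M N : Matrix (Fin n) (Fin n) R} (hM : Lv k M) (hN : Lv k N) :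
    Lv k (M - N) := by
  simpa [sub_eq_add_neg] using hM.add hN.neg

lemma Lv.mul {a b : ℕ} {M N : Matrix (Fin n) (Fin n) R} (hM : Lv a M) (hN : Lv b N) :
    Lv (a + b) (M * N) := by
  intro i j h
  rw [Matrix.mul_apply]
  apply Finset.sum_eq_zero
  intro l _
  by_cases hl : (l : ℕ) < (i : ℕ) + a
  · rw [hM i l hl, zero_mul]
  · rw [hN l j (by omega), mul_zero]

lemma Lv.pow {k m : ℕ} (hm : 1 ≤ m) {M : Matrix (Fin n) (Fin n) R} (hM : Lv k M) :
    Lv (m * k) (M ^ m) := by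
  induction m with
  | zero => omega
  | succ m ih =>
    by_cases hm0 : m = 0
    · subst hm0; simpa using hM
    · have := (ih (by omega)).mul hM
      simpa [pow_succ, Nat.succ_mul] using this

lemma Lv.unit_mul {k : ℕ} {x y : (Matrix (Fin n) (Fin n) R)ˣ}
    (hx : Lv k ((x : Matrix (Fin n) (Fin n) R) - 1))
    (hy : Lv k ((y : Matrix (Fin n) (Fin n) R) - 1)) :
    Lv k (((x * y : (Matrix (Fin n) (Fin n) R)ˣ) : Matrix (Fin n) (Fin n) R) - 1) := by
  have key : ((x * y : (Matrix (Fin n) (Fin n) R)ˣ) : Matrix (Fin n) (Fin n) R) - 1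
      = ((x : Matrix (Fin n) (Fin n) R) - 1) * ((y : Matrix (Fin n) (Fin n) R) - 1)
        + (((x : Matrix (Fin n) (Fin n) R) - 1) + ((y : Matrix (Fin n) (Fin n) R) - 1)) := by
    rw [Units.val_mul]; noncomm_ring
  rw [key]
  exact (Lv.mono (by omega) (hx.mul hy)).add (hx.add hy)

lemma lv_inv_aux {k : ℕ} (hk : 1 ≤ k) {N N' : Matrix (Fin n) (Fin n) R}
    (hx : Lv k N) (h4 : (N' + 1) * (N + 1) = 1) : Lv k N' := by
  have h6 : N' * N + N' + N = 0 := by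
    have h5 : (N' + 1) * (N + 1) = N' * N + N' + N + 1 := by noncomm_ring
    rw [h5] at h4
    have := congrArg (fun z => z - 1) h4
    simpa using this
  have key : N' = -N - N' * N := by
    calc N' = (N' * N + N' + N) - N' * N - N := by abel
    _ = -N - N' * N := by rw [h6]; abel
  have h0 : ∀ m : ℕ, ∀ i j : Fin n, (j : ℕ) = m → (j : ℕ) < (i : ℕ) → N' i j = 0 := by
    intro m
    induction m using Nat.strong_induction_on with
    | _ m ih =>
      intro i j hjm hij
      have hNij : N i j = 0 := hx i j (by omega)
      have hrow : ∀ l : Fin n, N' i l * N l j = 0 := by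
        intro l
        by_cases hl : (l : ℕ) < (j : ℕ)
        · rw [ih (l : ℕ) (by omega) i l rfl (by omega), zero_mul]
        · rw [hx l j (by omega), mul_zero]
      calc N' i j = (-N - N' * N) i j := by conv_lhs => rw [key]
      _ = -(N i j) - (N' * N) i j := by simp [Matrix.sub_apply, Matrix.neg_apply]
      _ = 0 := by
        rw [hNij, Matrix.mul_apply, Finset.sum_eq_zero (fun l _ => hrow l)]; simp
  have h0' : Lv 0 N' := fun i j h => h0 (j : ℕ) i j rfl (by omega)
  rw [key]
  exact hx.neg.sub (Lv.mono (by omega) (h0'.mul hx))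

lemma Lv.unit_inv {k : ℕ} (hk : 1 ≤ k) {x : (Matrix (Fin n) (Fin n) R)ˣ}
    (hx : Lv k ((x : Matrix (Fin n) (Fin n) R) - 1)) :
    Lv k (((x⁻¹ : (Matrix (Fin n) (Fin n) R)ˣ) : Matrix (Fin n) (Fin n) R) - 1) := by
  have hinv : ((x⁻¹ : (Matrix (Fin n) (Fin n) R)ˣ) : Matrix (Fin n) (Fin n) R)
      * (x : Matrix (Fin n) (Fin n) R) = 1 := by
    rw [← Units.val_mul, inv_mul_cancel, Units.val_one]
  refine lv_inv_aux hk hx ?_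
  rw [sub_add_cancel, sub_add_cancel]
  exact hinv

lemma lv0_unit {x : (Matrix (Fin n) (Fin n) R)ˣ}
    (h : Lv 0 ((x : Matrix (Fin n) (Fin n) R) - 1)) :
    Lv 0 ((x : Matrix (Fin n) (Fin n) R)) := by
  have := h.add lv_one
  simpa using this

lemma Lv.unit_comm {a b : ℕ} (ha : 1 ≤ a) (hb : 1 ≤ b) {x y : (Matrix (Fin n) (Fin n) R)ˣ}
    (hx : Lv a ((x : Matrix (Fin n) (Fin n) R) - 1))
    (hy : Lv b ((y : Matrix (Fin n) (Fin n) R) - 1)) :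
    Lv (a + b) (((⁅x, y⁆ : (Matrix (Fin n) (Fin n) R)ˣ) : Matrix (Fin n) (Fin n) R) - 1) := by
  set X : Matrix (Fin n) (Fin n) R := (x : Matrix (Fin n) (Fin n) R) with hX
  set Y : Matrix (Fin n) (Fin n) R := (y : Matrix (Fin n) (Fin n) R) with hY
  set Xi : Matrix (Fin n) (Fin n) R :=
    ((x⁻¹ : (Matrix (Fin n) (Fin n) R)ˣ) : Matrix (Fin n) (Fin n) R) with hXi
  set Yi : Matrix (Fin n) (Fin n) R :=
    ((y⁻¹ : (Matrix (Fin n) (Fin n) R)ˣ) : Matrix (Fin n) (Fin n) R) with hYi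
  have e1 : X * Xi = 1 := by rw [hX, hXi, ← Units.val_mul, mul_inv_cancel, Units.val_one]
  have e2 : Y * Yi = 1 := by rw [hY, hYi, ← Units.val_mul, mul_inv_cancel, Units.val_one]
  have hC : ((⁅x, y⁆ : (Matrix (Fin n) (Fin n) R)ˣ) : Matrix (Fin n) (Fin n) R)
      = X * Y * Xi * Yi := by
    simp [commutatorElement_def, Units.val_mul, hX, hY, hXi, hYi]
  have key : ((⁅x, y⁆ : (Matrix (Fin n) (Fin n) R)ˣ) : Matrix (Fin n) (Fin n) R) - 1
      = (X * Y - Y * X) * (Xi * Yi) := by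
    rw [hC]
    have hexp : (X * Y - Y * X) * (Xi * Yi) = X * Y * Xi * Yi - Y * (X * Xi) * Yi := by
      noncomm_ring
    rw [hexp, e1, mul_one, e2]
  have e3 : X * Y - Y * X = (X - 1) * (Y - 1) - (Y - 1) * (X - 1) := by noncomm_ring
  have h1 : Lv (a + b) (X * Y - Y * X) := by
    rw [e3]
    exact (hx.mul hy).sub (Lv.mono (by omega) (hy.mul hx))
  have h2 : Lv 0 (Xi * Yi) := by
    have hxi := lv0_unit (Lv.mono (Nat.zero_le a) (hx.unit_inv (k := a) ha))
    have hyi := lv0_unit (Lv.mono (Nat.zero_le b) (hy.unit_inv (k := b) hb))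
    exact hxi.mul hyi
  rw [key]
  exact h1.mul h2

lemma Lv.unit_pow {p : ℕ} [Fact p.Prime] [CharP R p] {k : ℕ}
    {x : (Matrix (Fin n) (Fin n) R)ˣ}
    (hx : Lv k ((x : Matrix (Fin n) (Fin n) R) - 1)) :
    Lv (p * k) (((x ^ p : (Matrix (Fin n) (Fin n) R)ˣ) : Matrix (Fin n) (Fin n) R) - 1) := by
  rcases Nat.eq_zero_or_pos n with rfl | hn
  · intro i j _; exact absurd i.2 (by omega)
  haveI : NeZero n := ⟨by omega⟩
  have hp : 0 < p := (Fact.out : p.Prime).pos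
  have hchar : ((x : Matrix (Fin n) (Fin n) R)) ^ p
      = 1 + ((x : Matrix (Fin n) (Fin n) R) - 1) ^ p := by
    calc ((x : Matrix (Fin n) (Fin n) R)) ^ p
        = (1 + ((x : Matrix (Fin n) (Fin n) R) - 1)) ^ p := by rw [add_sub_cancel]
    _ = 1 ^ p + ((x : Matrix (Fin n) (Fin n) R) - 1) ^ p :=
        add_pow_char_of_commute p (Commute.one_left _)
    _ = 1 + ((x : Matrix (Fin n) (Fin n) R) - 1) ^ p := by rw [one_pow]
  rw [Units.val_pow_eq_pow_val, hchar]
  simpa using hx.pow hp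

lemma mem_lv_one {x : (Matrix (Fin n) (Fin n) R)ˣ} (hx : x ∈ UnipotentGrp R n) :
    Lv 1 ((x : Matrix (Fin n) (Fin n) R) - 1) := by
  refine Subgroup.closure_induction ?_ ?_ ?_ ?_ hx
  · intro A hA i j hij
    rcases Nat.lt_or_ge (j : ℕ) (i : ℕ) with h | h
    · rw [Matrix.sub_apply, hA.1 i j (by exact_mod_cast h),
        Matrix.one_apply_ne (fun e => by subst e; omega), sub_zero]
    · have hji : j = i := Fin.ext (by omega)
      subst hji
      rw [Matrix.sub_apply, hA.2 j, Matrix.one_apply_eq, sub_self]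
  · simpa using lv_zero (n := n) (R := R) 1
  · intro a b _ _ ha hb; exact ha.unit_mul hb
  · intro a _ ha; exact ha.unit_inv (le_refl 1)

/-- The congruence filtration of the unipotent group, as subgroups of `U_n(R)`. -/
def K (R : Type*) [CommRing R] (n k : ℕ) : Subgroup ↥(UnipotentGrp R n) where
  carrier := {g | Lv (k + 1)
    (((g : (Matrix (Fin n) (Fin n) R)ˣ) : Matrix (Fin n) (Fin n) R) - 1)}
  one_mem' := by simpa using lv_zero (n := n) (R := R) (k + 1)
  mul_mem' := fun ha hb => Lv.unit_mul ha hb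
  inv_mem' := fun ha => Lv.unit_inv (by omega) ha

lemma mem_K {k : ℕ} {g : ↥(UnipotentGrp R n)} :
    g ∈ K R n k ↔ Lv (k + 1)
      (((g : (Matrix (Fin n) (Fin n) R)ˣ) : Matrix (Fin n) (Fin n) R) - 1) := Iff.rfl

lemma zass_le (R : Type*) [CommRing R] (p n : ℕ) [Fact p.Prime] [CharP R p] :
    ∀ fuel m, 1 ≤ m → m ≤ fuel + 1 →
      zassAux p ↥(UnipotentGrp R n) fuel m ≤ K R n (m - 1) := by
  have hp2 : 2 ≤ p := (Fact.out : p.Prime).two_le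
  intro fuel
  induction fuel with
  | zero =>
    intro m h1 h2
    have hm : m = 1 := by omega
    subst hm
    intro g _
    exact mem_K.mpr (mem_lv_one g.2)
  | succ fuel ih =>
    intro m h1 h2
    by_cases hm : m ≤ 1
    · have hm1 : m = 1 := by omega
      subst hm1
      intro g _
      exact mem_K.mpr (mem_lv_one g.2)
    · rw [zassAux, if_neg hm, Subgroup.closure_le]
      rintro g (⟨x, hxmem, rfl⟩ | ⟨i, j, hi, hj, hij, x, hxm, y, hym, rfl⟩)
      · -- p-th power generator
        set q := (m + p - 1) / p with hq
        have hq1 : 1 ≤ q := by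
          rw [hq, Nat.le_div_iff_mul_le (by omega)]
          omega
        have hqlt : q < m := by
          rw [hq, Nat.div_lt_iff_lt_mul (by omega)]
          have : m + p ≤ m * p := Nat.add_le_mul (by omega) (by omega)
          omega
        have hxK := ih q hq1 (by omega) hxmem
        rw [SetLike.mem_coe, mem_K]
        rw [mem_K] at hxK
        have hq2 : q - 1 + 1 = q := by omega
        rw [hq2] at hxK
        have hpow := Lv.unit_pow (p := p) (k := q) hxK
        have hle : m - 1 + 1 ≤ p * q := by
          have hdiv : (m + p - 1) / p < q + 1 := by rw [← hq]; omega
          have h1' : m + p - 1 < (q + 1) * p :=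
            (Nat.div_lt_iff_lt_mul (show 0 < p by omega)).mp hdiv
          have h1'' : m + p - 1 < q * p + p := by
            calc m + p - 1 < (q + 1) * p := h1'
            _ = q * p + p := by ring
          have hpq : p * q = q * p := Nat.mul_comm p q
          omega
        have hcoe : ((((x ^ p : ↥(UnipotentGrp R n))) : (Matrix (Fin n) (Fin n) R)ˣ))
            = ((x : (Matrix (Fin n) (Fin n) R)ˣ)) ^ p := rfl
        rw [hcoe]
        exact Lv.mono (by omega) hpow
      · -- commutator generator
        have hxK := ih i hi (by omega) hxm
        have hyK := ih j hj (by omega) hym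
        rw [SetLike.mem_coe, mem_K]
        rw [mem_K] at hxK hyK
        have hi' : i - 1 + 1 = i := by omega
        have hj' : j - 1 + 1 = j := by omega
        rw [hi'] at hxK
        rw [hj'] at hyK
        have hcoe : ((⁅x, y⁆ : ↥(UnipotentGrp R n)) : (Matrix (Fin n) (Fin n) R)ˣ)
            = ⁅(x : (Matrix (Fin n) (Fin n) R)ˣ), (y : (Matrix (Fin n) (Fin n) R)ˣ)⁆ := rfl
        rw [hcoe]
        have := Lv.unit_comm hi hj hxK hyK
        exact Lv.mono (by omega) this

end Stmt12Aux

/-- For `p` prime and `n ≥ 1`, the `n`-th term of the `p`-Zassenhaus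
filtration of `U_n(𝔽_p)` is trivial. -/
theorem stmt12 (p n : ℕ) (hp : p.Prime) (hn : 1 ≤ n) :
    zassenhaus p ↥(UnipotentGrp (ZMod p) n) n = ⊥ := by
  haveI : Fact p.Prime := ⟨hp⟩
  have h := Stmt12Aux.zass_le (ZMod p) p n n n hn (by omega)
  rw [eq_bot_iff]
  intro g hg
  have hK := h hg
  rw [Stmt12Aux.mem_K] at hK
  have hn1 : n - 1 + 1 = n := by omega
  rw [hn1] at hK
  have hmat : ((g : (Matrix (Fin n) (Fin n) (ZMod p))ˣ) : Matrix (Fin n) (Fin n) (ZMod p))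
      = 1 := by
    have hz : ((g : (Matrix (Fin n) (Fin n) (ZMod p))ˣ) : Matrix (Fin n) (Fin n) (ZMod p))
        - 1 = 0 := by
      ext i j
      have := hK i j (by omega)
      simpa using this
    have := sub_eq_zero.mp hz
    exact this
  rw [Subgroup.mem_bot]
  apply Subtype.ext
  apply Units.ext
  simpa using hmat
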